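/- arXiv:2511.06867 — 2 statements merged into one kernel-verified Lean document; each statement's English description precedes it below -/
import Mathlib

section
/- For every n ≥ 1 and every unit vector ψ in the n-qubit space (ℂ²)^⊗n, the Groverian entanglement measure E_g(ψ) vanishes if and only if ψ is a product state, i.e., ψ = u₁⊗u₂⊗⋯⊗uₙ for some single-qubit unit vectors u₁,…,uₙ ∈ ℂ². Moreover 0 ≤ E_g(ψ) ≤ 1 for every unit vector ψ. -/
open scoped BigOperators Kronecker ComplexOrder Matrix

namespace SKW

noncomputable section

/-- Bit strings of length `n`: vertices of the `n`-dimensional hypercube /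
    computational basis labels of `n` qubits. -/
abbrev BV (n : ℕ) := Fin n → Bool

/-- Inner product `⟨v|w⟩`, conjugate-linear in the first argument. -/
def ip {α : Type*} [Fintype α] (v w : α → ℂ) : ℂ :=
  ∑ i, (starRingEnd ℂ) (v i) * w i

/-- Squared `ℓ²`-norm of a vector of amplitudes. -/
def normSq {α : Type*} [Fintype α] (v : α → ℂ) : ℝ :=
  ∑ i, norm (v i) ^ 2

/-- Flip the `d`-th bit of `x` (i.e. `x ⊕ e_d`). -/
def flipBit {n : ℕ} (x : BV n) (d : Fin n) : BV n := Function.update x d (!x d)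

/-- The shift operator `S = Σ_{d,x} |d, x ⊕ e_d⟩⟨d, x|` on `ℂ^n ⊗ ℂ^N`. -/
def shift (n : ℕ) : Matrix (Fin n × BV n) (Fin n × BV n) ℂ :=
  Matrix.of fun p q => if p.1 = q.1 ∧ p.2 = flipBit q.2 q.1 then 1 else 0

/-- The coin-space equal superposition `|S^c⟩ = (1/√n) Σ_d |d⟩`. -/
def sc (n : ℕ) : Fin n → ℂ := fun _ => ((1 / Real.sqrt n : ℝ) : ℂ)

/-- The node-space equal superposition `|η⟩ = (1/√N) Σ_x |x⟩`, `N = 2^n`. -/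
def eta (n : ℕ) : BV n → ℂ := fun _ => ((1 / Real.sqrt ((2 : ℝ) ^ n) : ℝ) : ℂ)

/-- Grover coin `G = 2|S^c⟩⟨S^c| − I`. -/
def grover (n : ℕ) : Matrix (Fin n) (Fin n) ℂ :=
  (2 : ℂ) • Matrix.vecMulVec (sc n) (fun d => (starRingEnd ℂ) (sc n d)) - 1

/-- Rank-one projector `|a⟩⟨a|` onto a basis vector. -/
def projV {α : Type*} [Fintype α] [DecidableEq α] (a : α) : Matrix α α ℂ :=
  Matrix.of fun x y => if x = a ∧ y = a then 1 else 0

/-- Perturbed coin `C = G ⊗ I + (−I − G) ⊗ |x_tg⟩⟨x_tg|`. -/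
def coin (n : ℕ) (t : BV n) : Matrix (Fin n × BV n) (Fin n × BV n) ℂ :=
  grover n ⊗ₖ (1 : Matrix (BV n) (BV n) ℂ) +
    (-(1 : Matrix (Fin n) (Fin n) ℂ) - grover n) ⊗ₖ projV t

/-- Perturbed evolution operator `V = S·C`. -/
def walkOp (n : ℕ) (t : BV n) : Matrix (Fin n × BV n) (Fin n × BV n) ℂ :=
  shift n * coin n t

/-- Number of iterations `τ = ⌊(π/2)√(2^{n−1})⌋`. -/
def tau (n : ℕ) : ℕ := ⌊(Real.pi / 2) * Real.sqrt ((2 : ℝ) ^ (n - 1))⌋₊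

/-- Tensor product of a coin vector with a node vector. -/
def tensorCN {n : ℕ} (c : Fin n → ℂ) (v : BV n → ℂ) : Fin n × BV n → ℂ :=
  fun p => c p.1 * v p.2

/-- Computational basis vector `|a⟩`. -/
def basisVec {α : Type*} [DecidableEq α] (a : α) : α → ℂ :=
  fun x => if x = a then 1 else 0

/-- Target state `|Γ⟩ = |S^c⟩ ⊗ |x_tg⟩`. -/
def gammaSt (n : ℕ) (t : BV n) : Fin n × BV n → ℂ :=
  tensorCN (sc n) (basisVec t)

/-- Average success probability of the SKW-1 algorithm on initial node state `ψ`. -/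
def P1 (n : ℕ) (ψ : BV n → ℂ) : ℝ :=
  (1 / (2 : ℝ) ^ n) * ∑ t : BV n,
    norm (ip (gammaSt n t) ((walkOp n t ^ tau n).mulVec (tensorCN (sc n) ψ))) ^ 2

/-- Coherence fraction `f_c(ψ) = |⟨η|ψ⟩|²`. -/
def fc (n : ℕ) (ψ : BV n → ℂ) : ℝ := norm (ip (eta n) ψ) ^ 2

/-- Kronecker product of `n` single-qubit matrices, as a matrix on `(ℂ²)^⊗n`. -/
def kronN {n : ℕ} (U : Fin n → Matrix Bool Bool ℂ) : Matrix (BV n) (BV n) ℂ :=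
  Matrix.of fun x y => ∏ j, U j (x j) (y j)

/-- Tensor product of `n` single-qubit vectors. -/
def tensorVec {n : ℕ} (u : Fin n → Bool → ℂ) : BV n → ℂ :=
  fun x => ∏ j, u j (x j)

/-- Density matrix: positive semidefinite with trace one. -/
def IsDensity {α : Type*} [Fintype α] [DecidableEq α] (ρ : Matrix α α ℂ) : Prop :=
  ρ.PosSemidef ∧ ρ.trace = 1

/-- Separable state: finite convex combination of tensor products of
single-qubit density matrices. -/
def IsSep {n : ℕ} (σ : Matrix (BV n) (BV n) ℂ) : Prop :=
  ∃ (m : ℕ) (p : Fin m → ℝ) (ρ : Fin m → Fin n → Matrix Bool Bool ℂ),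
    (∀ i, 0 ≤ p i) ∧ ∑ i, p i = 1 ∧ (∀ i j, IsDensity (ρ i j)) ∧
      σ = ∑ i, (p i : ℂ) • kronN (ρ i)

/-- Fidelity `⟨ψ|ρ|ψ⟩` between a pure state and a density matrix. -/
def fid {α : Type*} [Fintype α] (ψ : α → ℂ) (ρ : Matrix α α ℂ) : ℝ :=
  (ip ψ (ρ.mulVec ψ)).re

/-- Groverian entanglement measure `E_g(ψ) = min_{σ separable} √(1 − ⟨ψ|σ|ψ⟩)`. -/
def Eg {n : ℕ} (ψ : BV n → ℂ) : ℝ :=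
  sInf {r : ℝ | ∃ σ, IsSep σ ∧ r = Real.sqrt (1 - fid ψ σ)}

/-- Incoherent state: density matrix diagonal in the computational basis. -/
def IsIncoherent {α : Type*} [Fintype α] [DecidableEq α] (δ : Matrix α α ℂ) : Prop :=
  IsDensity δ ∧ ∀ x y, x ≠ y → δ x y = 0

/-- Fidelity-based coherence measure `C_f(ψ) = min_{δ incoherent} √(1 − ⟨ψ|δ|ψ⟩)`. -/
def Cf {α : Type*} [Fintype α] [DecidableEq α] (ψ : α → ℂ) : ℝ :=
  sInf {r : ℝ | ∃ δ, IsIncoherent δ ∧ r = Real.sqrt (1 - fid ψ δ)}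

/-- Pauli X. -/
def PX : Matrix Bool Bool ℂ := Matrix.of fun a b => if a = b then 0 else 1

/-- Pauli Y. -/
def PY : Matrix Bool Bool ℂ :=
  Matrix.of fun a b => if a = b then 0 else if a then Complex.I else -Complex.I

/-- Pauli Z. -/
def PZ : Matrix Bool Bool ℂ :=
  Matrix.of fun a b => if a = b then (if a then -1 else 1) else 0

/-- The 2×2 Hadamard matrix. -/
def Had : Matrix Bool Bool ℂ :=
  Matrix.of fun a b => ((1 / Real.sqrt 2 : ℝ) : ℂ) * (if a && b then -1 else 1)

/-- `H^{⊗n}`. -/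
def HadN (n : ℕ) : Matrix (BV n) (BV n) ℂ := kronN fun _ => Had

/-- Membership in `{X, Y, Z}`. -/
def IsPauliXYZ (V : Matrix Bool Bool ℂ) : Prop := V = PX ∨ V = PY ∨ V = PZ

/-- Maximal average success probability of SKW-2: optimize over a layer of
single-qubit unitaries applied to the node register. -/
def P2 (n : ℕ) (ψ : BV n → ℂ) : ℝ :=
  sSup {r : ℝ | ∃ U : Fin n → Matrix Bool Bool ℂ,
    (∀ j, U j ∈ Matrix.unitaryGroup Bool ℂ) ∧ r = P1 n ((kronN U).mulVec ψ)}

/-- Maximal average success probability of SKW-3: a layer of Pauli gates from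
`{X,Y,Z}` followed by `H^{⊗n}`. -/
def P3 (n : ℕ) (ψ : BV n → ℂ) : ℝ :=
  sSup {r : ℝ | ∃ V : Fin n → Matrix Bool Bool ℂ,
    (∀ j, IsPauliXYZ (V j)) ∧ r = P1 n ((HadN n * kronN V).mulVec ψ)}

/-- Even Hamming-weight predicate. -/
def evenPar {m : ℕ} (x : BV m) : Prop :=
  Even (Finset.univ.filter (fun j => x j = true)).card

instance {m : ℕ} (x : BV m) : Decidable (evenPar x) := by
  unfold evenPar; infer_instance

/-- Equal superposition over even-parity vertices. -/
def etaE (m : ℕ) : BV m → ℂ :=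
  fun x => if evenPar x then ((1 / Real.sqrt ((2 : ℝ) ^ m / 2) : ℝ) : ℂ) else 0

/-- Projection onto even-parity vertices. -/
def projE {m : ℕ} (ψ : BV m → ℂ) : BV m → ℂ :=
  fun x => if evenPar x then ψ x else 0

/-- Optimized perturbed evolution `V_opt = S(G ⊗ I)S·C`. -/
def walkOptOp (m : ℕ) (t : BV m) : Matrix (Fin m × BV m) (Fin m × BV m) ℂ :=
  shift m * (grover m ⊗ₖ (1 : Matrix (BV m) (BV m) ℂ)) * shift m * coin m t

/-- `τ_opt = ⌊(π/(2√2))√N⌋`. -/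
def tauOpt (m : ℕ) : ℕ :=
  ⌊(Real.pi / (2 * Real.sqrt 2)) * Real.sqrt ((2 : ℝ) ^ m)⌋₊

/-- Average success probability of the optimized OSKW-1 algorithm. -/
def P1opt (m : ℕ) (ψ : BV m → ℂ) : ℝ :=
  (1 / ((2 : ℝ) ^ m / 2)) * ∑ t ∈ Finset.univ.filter (fun t : BV m => evenPar t),
    norm (ip (gammaSt m t)
      ((walkOptOp m t ^ tauOpt m).mulVec (tensorCN (sc m) (projE ψ)))) ^ 2

/-- Coherence fraction with respect to the even-parity equal superposition. -/
def fcE (m : ℕ) (ψ : BV m → ℂ) : ℝ := norm (ip (etaE m) ψ) ^ 2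

/-- Parity bit of a bit string. -/
def parityBit {n : ℕ} (x : BV n) : Bool :=
  Nat.bodd (Finset.univ.filter (fun j => x j = true)).card

/-- Embed an `n`-qubit node state into the even-parity subspace of the
`(n+1)`-dimensional hypercube by appending a parity bit. -/
def embedEven {n : ℕ} (ψ : BV n → ℂ) : BV (n + 1) → ℂ :=
  fun x =>
    if x (Fin.last n) = parityBit (fun j : Fin n => x j.castSucc)
    then ψ (fun j : Fin n => x j.castSucc) else 0

/-- Maximal average success probability of OSKW-2. -/
def P2opt (n : ℕ) (ψ : BV n → ℂ) : ℝ :=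
  sSup {r : ℝ | ∃ U : Fin n → Matrix Bool Bool ℂ,
    (∀ j, U j ∈ Matrix.unitaryGroup Bool ℂ) ∧
      r = P1opt (n + 1) (embedEven ((kronN U).mulVec ψ))}

/-- Maximal average success probability of OSKW-3. -/
def P3opt (n : ℕ) (ψ : BV n → ℂ) : ℝ :=
  sSup {r : ℝ | ∃ V : Fin n → Matrix Bool Bool ℂ,
    (∀ j, IsPauliXYZ (V j)) ∧
      r = P1opt (n + 1) (embedEven ((HadN n * kronN V).mulVec ψ))}

/-- Input density matrix `ρ_in = |S^c⟩⟨S^c| ⊗ ρ`. -/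
def rhoIn (n : ℕ) (ρ : Matrix (BV n) (BV n) ℂ) :
    Matrix (Fin n × BV n) (Fin n × BV n) ℂ :=
  Matrix.vecMulVec (sc n) (fun d => (starRingEnd ℂ) (sc n d)) ⊗ₖ ρ

/-- Average success probability of SKW-1 with a mixed initial node state. -/
def P1mix (n : ℕ) (ρ : Matrix (BV n) (BV n) ℂ) : ℝ :=
  (1 / (2 : ℝ) ^ n) * ∑ t : BV n,
    ((walkOp n t ^ tau n * rhoIn n ρ * (walkOp n t ^ tau n).conjTranspose *
      Matrix.vecMulVec (gammaSt n t) (fun p => (starRingEnd ℂ) (gammaSt n t p))).trace).re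

/-- Coherence fraction `f_c(ρ) = ⟨η|ρ|η⟩` of a mixed state. -/
def fcMix (n : ℕ) (ρ : Matrix (BV n) (BV n) ℂ) : ℝ := fid (eta n) ρ

/-- The all-zeros basis state `|0ⁿ⟩`. -/
def zeroVec (n : ℕ) : BV n → ℂ := basisVec (fun _ => false)

/-- The single-qubit state `|+⟩`. -/
def plusVec : Bool → ℂ := fun _ => ((1 / Real.sqrt 2 : ℝ) : ℂ)

/-- Product (unentangled) pure state. -/
def IsProductVec {n : ℕ} (ψ : BV n → ℂ) : Prop :=
  ∃ u : Fin n → Bool → ℂ, (∀ j, normSq (u j) = 1) ∧ ψ = tensorVec u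



/-! ### Auxiliary lemmas for the Groverian entanglement theorem -/

section Aux

variable {α : Type*} [Fintype α]

lemma ip_self_eq (v : α → ℂ) : ip v v = (normSq v : ℂ) := by
  unfold ip normSq
  push_cast
  refine Finset.sum_congr rfl fun i _ => ?_
  rw [← Complex.normSq_eq_conj_mul_self]
  norm_cast
  exact (Complex.sq_norm _).symm

lemma normSq_nonneg' (v : α → ℂ) : 0 ≤ normSq v :=
  Finset.sum_nonneg fun _ _ => sq_nonneg _

lemma ip_conj (v w : α → ℂ) : ip v w = (starRingEnd ℂ) (ip w v) := by
  unfold ip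
  rw [map_sum]
  refine Finset.sum_congr rfl fun i _ => ?_
  rw [map_mul, Complex.conj_conj]
  ring

lemma ip_smul_left (c : ℂ) (v w : α → ℂ) :
    ip (c • v) w = (starRingEnd ℂ) c * ip v w := by
  unfold ip
  rw [Finset.mul_sum]
  refine Finset.sum_congr rfl fun i _ => ?_
  simp [map_mul]; ring

lemma ip_smul_right (c : ℂ) (v w : α → ℂ) : ip v (c • w) = c * ip v w := by
  unfold ip
  rw [Finset.mul_sum]
  refine Finset.sum_congr rfl fun i _ => ?_
  simp; ring

lemma ip_sub_left (u v w : α → ℂ) : ip (u - v) w = ip u w - ip v w := by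
  unfold ip
  rw [← Finset.sum_sub_distrib]
  refine Finset.sum_congr rfl fun i _ => ?_
  simp [map_sub, sub_mul]

lemma ip_sub_right (u v w : α → ℂ) : ip u (v - w) = ip u v - ip u w := by
  unfold ip
  rw [← Finset.sum_sub_distrib]
  refine Finset.sum_congr rfl fun i _ => ?_
  simp [mul_sub]

lemma ip_sum_right {ι : Type*} (s : Finset ι) (v : α → ℂ) (w : ι → α → ℂ) :
    ip v (∑ k ∈ s, w k) = ∑ k ∈ s, ip v (w k) := by
  unfold ip
  rw [Finset.sum_comm]
  refine Finset.sum_congr rfl fun i _ => ?_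
  simp [Finset.mul_sum]

/-- Rank-one projector onto a vector. -/
def outerM (v : α → ℂ) : Matrix α α ℂ :=
  Matrix.of fun x y => v x * (starRingEnd ℂ) (v y)

lemma outerM_mulVec (v ψ : α → ℂ) :
    (outerM v).mulVec ψ = fun x => v x * ip v ψ := by
  funext x
  unfold outerM Matrix.mulVec dotProduct ip
  rw [Finset.mul_sum]
  refine Finset.sum_congr rfl fun i _ => ?_
  simp; ring

lemma fid_outerM (ψ v : α → ℂ) :
    fid ψ (outerM v) = norm (ip v ψ) ^ 2 := by
  unfold fid
  rw [outerM_mulVec]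
  have : ip ψ (fun x => v x * ip v ψ) = ip ψ v * ip v ψ := by
    unfold ip
    rw [Finset.sum_mul]
    refine Finset.sum_congr rfl fun i _ => ?_
    ring
  rw [this, ip_conj ψ v, ← Complex.normSq_eq_conj_mul_self, Complex.sq_norm]
  exact Complex.ofReal_re _

lemma outerM_density [DecidableEq α] (v : α → ℂ) (hv : normSq v = 1) :
    IsDensity (outerM v) := by
  constructor
  · refine Matrix.PosSemidef.of_dotProduct_mulVec_nonneg ?_ ?_
    · ext x y
      simp only [outerM, Matrix.conjTranspose_apply, Matrix.of_apply, star_mul',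
        Complex.star_def, Complex.conj_conj]
      ring
    · intro x
      have hmv : (outerM v).mulVec x = fun a => v a * ip v x := outerM_mulVec v x
      rw [hmv]
      have : (dotProduct (star x) fun a => v a * ip v x) =
          ((Complex.normSq (ip v x) : ℝ) : ℂ) := by
        unfold dotProduct
        have h1 : ∑ i, star x i * (v i * ip v x) = ip x v * ip v x := by
          unfold ip
          rw [Finset.sum_mul]
          refine Finset.sum_congr rfl fun i _ => ?_
          simp only [Pi.star_apply, Complex.star_def]
          ring
        rw [h1, ip_conj x v, ← Complex.normSq_eq_conj_mul_self]
      rw [this]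
      exact Complex.zero_le_real.2 (Complex.normSq_nonneg _)
  · unfold Matrix.trace outerM
    have : ∀ i : α, Matrix.diag (Matrix.of fun x y => v x * (starRingEnd ℂ) (v y)) i
        = (starRingEnd ℂ) (v i) * v i := fun i => by
      simp [Matrix.diag]; ring
    calc (∑ i, Matrix.diag (Matrix.of fun x y => v x * (starRingEnd ℂ) (v y)) i)
        = ∑ i, (starRingEnd ℂ) (v i) * v i := Finset.sum_congr rfl fun i _ => this i
      _ = ip v v := rfl
      _ = (normSq v : ℂ) := ip_self_eq v
      _ = 1 := by rw [hv]; norm_num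

lemma sum_mulVec' {ι : Type*} (s : Finset ι) (M : ι → Matrix α α ℂ) (ψ : α → ℂ) :
    (∑ k ∈ s, M k).mulVec ψ = ∑ k ∈ s, (M k).mulVec ψ := by
  funext x
  simp only [Matrix.mulVec, dotProduct, Finset.sum_apply, Matrix.sum_apply,
    Finset.sum_mul]
  rw [Finset.sum_comm]

lemma fid_sum {ι : Type*} (s : Finset ι) (ψ : α → ℂ) (M : ι → Matrix α α ℂ) :
    fid ψ (∑ k ∈ s, M k) = ∑ k ∈ s, fid ψ (M k) := by
  unfold fid
  rw [sum_mulVec', ip_sum_right, Complex.re_sum]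

lemma fid_smul_real (c : ℝ) (ψ : α → ℂ) (M : Matrix α α ℂ) :
    fid ψ ((c : ℂ) • M) = c * fid ψ M := by
  unfold fid
  rw [Matrix.smul_mulVec, ip_smul_right]
  simp [Complex.re_ofReal_mul]

end Aux

section AuxN

variable {n : ℕ}

lemma normSq_tensorVec (u : Fin n → Bool → ℂ) :
    normSq (tensorVec u) = ∏ j, normSq (u j) := by
  unfold normSq tensorVec
  have h1 : ∀ x : BV n, norm (∏ j, u j (x j)) ^ 2
      = ∏ j, norm (u j (x j)) ^ 2 := fun x => by
    rw [norm_prod, ← Finset.prod_pow]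
  calc (∑ x : BV n, norm (∏ j, u j (x j)) ^ 2)
      = ∑ x : BV n, ∏ j, norm (u j (x j)) ^ 2 :=
        Finset.sum_congr rfl fun x _ => h1 x
    _ = ∏ j, ∑ b, norm (u j b) ^ 2 := by
        rw [Finset.prod_univ_sum]
        rw [Fintype.piFinset_univ]

lemma kronN_outerM (u : Fin n → Bool → ℂ) :
    kronN (fun j => outerM (u j)) = outerM (tensorVec u) := by
  ext x y
  simp only [kronN, outerM, tensorVec, Matrix.of_apply, map_prod]
  rw [← Finset.prod_mul_distrib]

lemma isSep_outerM_tensor (u : Fin n → Bool → ℂ) (hu : ∀ j, normSq (u j) = 1) :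
    IsSep (outerM (tensorVec u)) := by
  refine ⟨1, fun _ => 1, fun _ j => outerM (u j), fun _ => zero_le_one, by simp,
    fun _ j => outerM_density _ (hu j), ?_⟩
  rw [Fin.sum_univ_one]
  norm_num
  exact (kronN_outerM u).symm

/-- Spectral decomposition of a density matrix into pure states. -/
lemma density_decomp {β : Type*} [Fintype β] [DecidableEq β]
    {ρ : Matrix β β ℂ} (h : IsDensity ρ) :
    ∃ (l : β → ℝ) (v : β → β → ℂ), (∀ k, 0 ≤ l k) ∧ (∑ k, l k) = 1 ∧
      (∀ k, normSq (v k) = 1) ∧ ρ = ∑ k, (l k : ℂ) • outerM (v k) := by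
  obtain ⟨hpsd, htr⟩ := h
  have hH : ρ.IsHermitian := hpsd.1
  set V : Matrix β β ℂ := (hH.eigenvectorUnitary : Matrix β β ℂ) with hV
  have hstar : (star V) * V = 1 := Unitary.coe_star_mul_self hH.eigenvectorUnitary
  refine ⟨hH.eigenvalues, fun k b => V b k, fun k => hpsd.eigenvalues_nonneg k, ?_, ?_, ?_⟩
  · -- trace
    have h1 : ρ.trace = ∑ k, (hH.eigenvalues k : ℂ) := by
      conv_lhs => rw [hH.spectral_theorem, Unitary.conjStarAlgAut_apply]
      rw [← hV, Matrix.trace_mul_cycle, hstar, Matrix.one_mul,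
        Matrix.trace_diagonal]
      rfl
    rw [htr] at h1
    have := h1.symm
    exact_mod_cast this
  · -- columns unit
    intro k
    have h2 : ((star V) * V) k k = 1 := by rw [hstar]; simp
    rw [Matrix.mul_apply] at h2
    have h3 : ∀ b, (star V) k b * V b k = ((norm (V b k) ^ 2 : ℝ) : ℂ) := by
      intro b
      rw [Matrix.star_apply, Complex.star_def, ← Complex.normSq_eq_conj_mul_self]
      norm_cast
      exact (Complex.sq_norm _).symm
    rw [Finset.sum_congr rfl fun b _ => h3 b] at h2
    have h4 : ((∑ b, norm (V b k) ^ 2 : ℝ) : ℂ) = 1 := by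
      push_cast
      push_cast at h2
      exact h2
    unfold normSq
    exact_mod_cast h4
  · -- decomposition
    ext x y
    conv_lhs => rw [hH.spectral_theorem, Unitary.conjStarAlgAut_apply]
    rw [← hV, Matrix.mul_apply]
    rw [Matrix.sum_apply]
    refine Finset.sum_congr rfl fun k _ => ?_
    rw [Matrix.mul_diagonal, Matrix.star_apply, Complex.star_def]
    simp only [Matrix.smul_apply, outerM, Matrix.of_apply, smul_eq_mul,
      Function.comp_apply]
    have : (RCLike.ofReal (hH.eigenvalues k) : ℂ) = ((hH.eigenvalues k : ℝ) : ℂ) := rfl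
    rw [this]
    ring

lemma fid_kronN_le (ψ : BV n → ℂ) (ρ : Fin n → Matrix Bool Bool ℂ)
    (hρ : ∀ j, IsDensity (ρ j)) (F : ℝ)
    (hF : ∀ w : Fin n → Bool → ℂ, (∀ j, normSq (w j) = 1) →
      norm (ip (tensorVec w) ψ) ^ 2 ≤ F) :
    fid ψ (kronN ρ) ≤ F := by
  choose l v hl hsum hnorm hdec using fun j => density_decomp (hρ j)
  have hkron : kronN ρ = ∑ g : BV n,
      (((∏ j, l j (g j)) : ℝ) : ℂ) • outerM (tensorVec fun j => v j (g j)) := by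
    ext x y
    have hentry : ∀ j, ρ j (x j) (y j)
        = ∑ k, (l j k : ℂ) * (v j k (x j) * (starRingEnd ℂ) (v j k (y j))) := by
      intro j
      rw [hdec j]
      rw [Matrix.sum_apply]
      refine Finset.sum_congr rfl fun k _ => ?_
      simp [outerM]
    calc kronN ρ x y = ∏ j, ρ j (x j) (y j) := rfl
      _ = ∏ j, ∑ k, (l j k : ℂ) * (v j k (x j) * (starRingEnd ℂ) (v j k (y j))) :=
          Finset.prod_congr rfl fun j _ => hentry j
      _ = ∑ g : BV n, ∏ j,
            (l j (g j) : ℂ) * (v j (g j) (x j) * (starRingEnd ℂ) (v j (g j) (y j))) := by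
          rw [Finset.prod_univ_sum, Fintype.piFinset_univ]
      _ = ∑ g : BV n, ((((∏ j, l j (g j)) : ℝ) : ℂ) •
            outerM (tensorVec fun j => v j (g j))) x y := by
          refine Finset.sum_congr rfl fun g _ => ?_
          simp only [Matrix.smul_apply, outerM, Matrix.of_apply, smul_eq_mul,
            tensorVec, map_prod]
          push_cast
          rw [Finset.prod_mul_distrib, Finset.prod_mul_distrib]
      _ = (∑ g : BV n, (((∏ j, l j (g j)) : ℝ) : ℂ) •
            outerM (tensorVec fun j => v j (g j))) x y := by
          rw [Matrix.sum_apply]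
  rw [hkron, fid_sum]
  have hterm : ∀ g : BV n,
      fid ψ ((((∏ j, l j (g j)) : ℝ) : ℂ) • outerM (tensorVec fun j => v j (g j)))
        ≤ (∏ j, l j (g j)) * F := by
    intro g
    rw [fid_smul_real, fid_outerM]
    have hprod : 0 ≤ ∏ j, l j (g j) := Finset.prod_nonneg fun j _ => hl j (g j)
    exact mul_le_mul_of_nonneg_left (hF _ fun j => hnorm j (g j)) hprod
  calc (∑ g : BV n, fid ψ ((((∏ j, l j (g j)) : ℝ) : ℂ) •
          outerM (tensorVec fun j => v j (g j))))
      ≤ ∑ g : BV n, (∏ j, l j (g j)) * F :=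
        Finset.sum_le_sum fun g _ => hterm g
    _ = (∑ g : BV n, ∏ j, l j (g j)) * F := by rw [Finset.sum_mul]
    _ = (∏ j, ∑ k, l j k) * F := by rw [Finset.prod_univ_sum, Fintype.piFinset_univ]
    _ = F := by
        rw [Finset.prod_congr rfl fun j _ => hsum j]
        simp

lemma fid_sep_le (ψ : BV n → ℂ) (F : ℝ)
    (hF : ∀ w : Fin n → Bool → ℂ, (∀ j, normSq (w j) = 1) →
      norm (ip (tensorVec w) ψ) ^ 2 ≤ F)
    (σ : Matrix (BV n) (BV n) ℂ) (hσ : IsSep σ) : fid ψ σ ≤ F := by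
  obtain ⟨m, p, ρ, hp, hps, hd, rfl⟩ := hσ
  rw [fid_sum]
  have hterm : ∀ i, fid ψ ((p i : ℂ) • kronN (ρ i)) ≤ p i * F := by
    intro i
    rw [fid_smul_real]
    exact mul_le_mul_of_nonneg_left (fid_kronN_le ψ (ρ i) (hd i) F hF) (hp i)
  calc (∑ i, fid ψ ((p i : ℂ) • kronN (ρ i))) ≤ ∑ i, p i * F :=
        Finset.sum_le_sum fun i _ => hterm i
    _ = (∑ i, p i) * F := by rw [Finset.sum_mul]
    _ = F := by rw [hps, one_mul]

lemma exists_product_max (n : ℕ) (ψ : BV n → ℂ) :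
    ∃ u : Fin n → Bool → ℂ, (∀ j, normSq (u j) = 1) ∧
      ∀ w : Fin n → Bool → ℂ, (∀ j, normSq (w j) = 1) →
        norm (ip (tensorVec w) ψ) ^ 2 ≤ norm (ip (tensorVec u) ψ) ^ 2 := by
  set K : Set (Fin n → Bool → ℂ) := {u | ∀ j, normSq (u j) = 1} with hK
  have hcont_ns : ∀ j : Fin n, Continuous fun u : Fin n → Bool → ℂ => normSq (u j) := by
    intro j
    unfold normSq
    exact continuous_finset_sum _ fun b _ =>
      (continuous_norm.comp ((continuous_apply b).comp (continuous_apply j))).pow 2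
  have hK_closed : IsClosed K := by
    have : K = ⋂ j, {u : Fin n → Bool → ℂ | normSq (u j) = 1} := by
      ext u; simp [hK, Set.mem_iInter]
    rw [this]
    exact isClosed_iInter fun j => isClosed_eq (hcont_ns j) continuous_const
  have hK_bdd : Bornology.IsBounded K := by
    rw [isBounded_iff_forall_norm_le]
    refine ⟨1, fun u hu => ?_⟩
    rw [pi_norm_le_iff_of_nonneg zero_le_one]
    intro j
    rw [pi_norm_le_iff_of_nonneg zero_le_one]
    intro b
    have h1 : norm (u j b) ^ 2 ≤ normSq (u j) :=
      Finset.single_le_sum (f := fun b => norm (u j b) ^ 2)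
        (fun _ _ => sq_nonneg _) (Finset.mem_univ b)
    rw [hu j] at h1
    have h2 : (0 : ℝ) ≤ norm (u j b) := norm_nonneg _
    have : ‖u j b‖ = norm (u j b) := rfl
    rw [this]
    nlinarith
  have hK_cpt : IsCompact K := Metric.isCompact_of_isClosed_isBounded hK_closed hK_bdd
  have hne : K.Nonempty := by
    refine ⟨fun _ => basisVec false, fun j => ?_⟩
    unfold normSq basisVec
    rw [Fintype.sum_bool]
    norm_num
  have hg : Continuous fun u : Fin n → Bool → ℂ =>
      norm (ip (tensorVec u) ψ) ^ 2 := by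
    apply Continuous.pow
    apply continuous_norm.comp
    unfold ip tensorVec
    exact continuous_finset_sum _ fun x _ =>
      ((Complex.continuous_conj.comp (continuous_finset_prod _ fun j _ =>
        (continuous_apply (x j)).comp (continuous_apply j))).mul continuous_const)
  obtain ⟨u, huK, hmax⟩ := hK_cpt.exists_isMaxOn hne hg.continuousOn
  exact ⟨u, huK, fun w hw => hmax hw⟩

lemma Eg_eq_sqrt (ψ : BV n → ℂ) (u : Fin n → Bool → ℂ)
    (hu : ∀ j, normSq (u j) = 1)
    (hmax : ∀ w : Fin n → Bool → ℂ, (∀ j, normSq (w j) = 1) →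
      norm (ip (tensorVec w) ψ) ^ 2 ≤ norm (ip (tensorVec u) ψ) ^ 2) :
    Eg ψ = Real.sqrt (1 - norm (ip (tensorVec u) ψ) ^ 2) := by
  set F := norm (ip (tensorVec u) ψ) ^ 2 with hF
  have hmem : Real.sqrt (1 - F) ∈
      {r : ℝ | ∃ σ, IsSep σ ∧ r = Real.sqrt (1 - fid ψ σ)} :=
    ⟨outerM (tensorVec u), isSep_outerM_tensor u hu, by rw [fid_outerM]⟩
  have hbdd : BddBelow {r : ℝ | ∃ σ, IsSep σ ∧ r = Real.sqrt (1 - fid ψ σ)} := by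
    refine ⟨0, fun r hr => ?_⟩
    obtain ⟨σ, _, rfl⟩ := hr
    exact Real.sqrt_nonneg _
  refine le_antisymm (csInf_le hbdd hmem) ?_
  refine le_csInf ⟨_, hmem⟩ ?_
  rintro r ⟨σ, hσ, rfl⟩
  have := fid_sep_le ψ F (fun w hw => hmax w hw) σ hσ
  exact Real.sqrt_le_sqrt (by linarith)

end AuxN

/-- The Groverian entanglement of a unit vector vanishes iff the vector is a
product state, and it always lies in `[0, 1]`. -/
theorem groverian_zero_iff_product :
    ∀ n : ℕ, 1 ≤ n → ∀ ψ : BV n → ℂ, normSq ψ = 1 →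
      (Eg ψ = 0 ↔ ∃ u : Fin n → Bool → ℂ,
        (∀ j, normSq (u j) = 1) ∧ ψ = tensorVec u) ∧
      0 ≤ Eg ψ ∧ Eg ψ ≤ 1 := by
  intro n hn ψ hψ
  obtain ⟨u, hu, hmax⟩ := exists_product_max n ψ
  have hEg : Eg ψ = Real.sqrt (1 - norm (ip (tensorVec u) ψ) ^ 2) :=
    Eg_eq_sqrt ψ u hu hmax
  set F := norm (ip (tensorVec u) ψ) ^ 2 with hFdef
  refine ⟨⟨?_, ?_⟩, ?_, ?_⟩
  · -- Eg = 0 → product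
    intro h0
    rw [hEg, Real.sqrt_eq_zero'] at h0
    have hF1 : 1 ≤ F := by linarith
    set φ := tensorVec u with hφdef
    have hφ1 : normSq φ = 1 := by
      rw [hφdef, normSq_tensorVec, Finset.prod_congr rfl fun j _ => hu j,
        Finset.prod_const_one]
    set c := ip φ ψ with hc
    have hφφ : ip φ φ = 1 := by rw [ip_self_eq, hφ1]; norm_num
    have hψψ : ip ψ ψ = 1 := by rw [ip_self_eq, hψ]; norm_num
    have hexp : ip (ψ - c • φ) (ψ - c • φ) = 1 - (Complex.normSq c : ℂ) := by
      rw [ip_sub_left, ip_sub_right, ip_sub_right, ip_smul_left, ip_smul_left,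
        ip_smul_right, ip_smul_right, hφφ, hψψ, ← hc]
      have hψφ : ip ψ φ = (starRingEnd ℂ) c := by rw [hc, ← ip_conj]
      rw [hψφ, Complex.normSq_eq_conj_mul_self]
      ring
    have hns : normSq (ψ - c • φ) = 1 - Complex.normSq c := by
      have h1 : (normSq (ψ - c • φ) : ℂ) = 1 - (Complex.normSq c : ℂ) := by
        rw [← ip_self_eq, hexp]
      exact_mod_cast h1
    have hc_le : Complex.normSq c ≤ 1 := by
      have := normSq_nonneg' (ψ - c • φ); linarith
    have hc_ge : 1 ≤ Complex.normSq c := by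
      rw [← Complex.sq_norm]; exact hF1
    have hc1 : Complex.normSq c = 1 := le_antisymm hc_le hc_ge
    have hzero : normSq (ψ - c • φ) = 0 := by rw [hns, hc1]; ring
    have hpt : ∀ x, ψ x = c * φ x := by
      intro x
      have h1 := (Finset.sum_eq_zero_iff_of_nonneg
        (fun i _ => sq_nonneg (norm ((ψ - c • φ) i)))).1 hzero x
        (Finset.mem_univ x)
      have h2 : (ψ - c • φ) x = 0 := by
        have := pow_eq_zero_iff (n := 2) (by norm_num) |>.1 h1
        exact norm_eq_zero.1 this
      have h3 : ψ x - c * φ x = 0 := h2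
      linear_combination h3
    set i0 : Fin n := ⟨0, hn⟩ with hi0
    refine ⟨Function.update u i0 (fun b => c * u i0 b), ?_, ?_⟩
    · intro j
      rcases eq_or_ne j i0 with h | hj
      · rw [h, Function.update_self]
        unfold normSq
        have hb : ∀ b, norm (c * u i0 b) ^ 2
            = Complex.normSq c * norm (u i0 b) ^ 2 := by
          intro b
          rw [norm_mul, mul_pow, Complex.sq_norm]
        rw [Finset.sum_congr rfl fun b _ => hb b, ← Finset.mul_sum]
        have h5 := hu i0
        unfold normSq at h5
        rw [h5, hc1, mul_one]
      · rw [Function.update_of_ne hj]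
        exact hu j
    · funext x
      have h1 : tensorVec (Function.update u i0 fun b => c * u i0 b) x
          = c * tensorVec u x := by
        unfold tensorVec
        rw [← Finset.mul_prod_erase Finset.univ
            (fun j => Function.update u i0 (fun b => c * u i0 b) j (x j))
            (Finset.mem_univ i0),
          ← Finset.mul_prod_erase Finset.univ (fun j => u j (x j))
            (Finset.mem_univ i0)]
        have h2 : ∏ j ∈ Finset.univ.erase i0,
            Function.update u i0 (fun b => c * u i0 b) j (x j)
            = ∏ j ∈ Finset.univ.erase i0, u j (x j) :=
          Finset.prod_congr rfl fun j hj => by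
            rw [Function.update_of_ne (Finset.ne_of_mem_erase hj)]
        rw [h2, Function.update_self]
        ring
      rw [h1, ← hφdef, ← hpt x]
  · -- product → Eg = 0
    rintro ⟨w, hw, rfl⟩
    rw [hEg, Real.sqrt_eq_zero']
    have h1 := hmax w hw
    rw [ip_self_eq, hψ] at h1
    simp only [Complex.ofReal_one, map_one, norm_one, one_pow] at h1
    linarith
  · -- 0 ≤ Eg
    apply Real.sInf_nonneg
    rintro r ⟨σ, _, rfl⟩
    exact Real.sqrt_nonneg _
  · -- Eg ≤ 1
    rw [hEg]
    rw [Real.sqrt_le_one]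
    have : 0 ≤ F := sq_nonneg _
    linarith

end

end SKW
end

section
/- For every n ≥ 1 and every unit vector ψ in the n-qubit space (ℂ²)^⊗n, the maximum of |⟨0ⁿ|(V₁⊗V₂⊗⋯⊗Vₙ)|ψ⟩|² over all choices of V₁,…,Vₙ with each V_j a Pauli matrix in {X, Y, Z} equals the maximum of |⟨i|ψ⟩|² over all computational basis states |i⟩, which in turn equals 1 − C_f(ψ)². -/
open scoped BigOperators Kronecker ComplexOrder Matrix

namespace SKW

noncomputable section

/-- Maximizing `|⟨0ⁿ|(V₁⊗⋯⊗Vₙ)|ψ⟩|²` over Pauli layers from `{X,Y,Z}` equals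
the maximal squared overlap with computational basis states, which equals
`1 − C_f(ψ)²`. -/
theorem pauli_layer_max_coherence :
    ∀ n : ℕ, 1 ≤ n → ∀ ψ : BV n → ℂ, normSq ψ = 1 →
      sSup {r : ℝ | ∃ V : Fin n → Matrix Bool Bool ℂ, (∀ j, IsPauliXYZ (V j)) ∧
          r = norm (ip (zeroVec n) ((kronN V).mulVec ψ)) ^ 2}
        = sSup {r : ℝ | ∃ i : BV n, r = norm (ψ i) ^ 2} ∧
      sSup {r : ℝ | ∃ i : BV n, r = norm (ψ i) ^ 2} = 1 - Cf ψ ^ 2 := by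
  classical
  intro n hn ψ hψ
  obtain ⟨i₀, -, hmax⟩ := Finset.exists_max_image (Finset.univ : Finset (BV n))
    (fun i => norm (ψ i) ^ 2) ⟨fun _ => false, Finset.mem_univ _⟩
  have hmax' : ∀ i : BV n, norm (ψ i) ^ 2 ≤ norm (ψ i₀) ^ 2 :=
    fun i => hmax i (Finset.mem_univ i)
  have hXneZ : PX ≠ PZ := by
    intro h
    have := congrFun (congrFun h false) false
    simp [PX, PZ] at this
  have hYneZ : PY ≠ PZ := by
    intro h
    have := congrFun (congrFun h false) false
    simp [PY, PZ] at this
  have hip0 : ∀ w : BV n → ℂ, ip (zeroVec n) w = w (fun _ => false) := by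
    intro w
    unfold ip zeroVec basisVec
    simp
  have key : ∀ V : Fin n → Matrix Bool Bool ℂ, (∀ j, IsPauliXYZ (V j)) →
      norm (ip (zeroVec n) ((kronN V).mulVec ψ))
        = norm (ψ (fun j => if V j = PZ then false else true)) := by
    intro V hV
    set xs : BV n := fun j => if V j = PZ then false else true with hxs
    have hxsj : ∀ j, xs j = if V j = PZ then false else true := fun j => rfl
    have h1 : ∀ j, norm (V j false (xs j)) = 1 := by
      intro j
      rcases hV j with h | h | h
      · rw [hxsj j, h, if_neg hXneZ]; simp [PX]
      · rw [hxsj j, h, if_neg hYneZ]; simp [PY]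
      · rw [hxsj j, h, if_pos rfl]; simp [PZ]
    have h0 : ∀ j, V j false (!xs j) = 0 := by
      intro j
      rcases hV j with h | h | h
      · rw [hxsj j, h, if_neg hXneZ]; simp [PX]
      · rw [hxsj j, h, if_neg hYneZ]; simp [PY]
      · rw [hxsj j, h, if_pos rfl]; simp [PZ]
    rw [hip0]
    have hmv : (kronN V).mulVec ψ (fun _ => false)
        = (∏ j, V j false (xs j)) * ψ xs := by
      show ∑ x : BV n, kronN V (fun _ => false) x * ψ x = _
      rw [Finset.sum_eq_single xs]
      · rfl
      · intro x _ hx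
        have hex : ∃ j, x j ≠ xs j := by
          by_contra hc
          push_neg at hc
          exact hx (funext hc)
        obtain ⟨j, hj⟩ := hex
        have hxj : x j = !xs j := by
          cases h : xs j <;> cases h2 : x j <;> simp_all
        have hz : V j false (x j) = 0 := by rw [hxj]; exact h0 j
        have : kronN V (fun _ => false) x = 0 := by
          show (∏ k, V k false (x k)) = 0
          exact Finset.prod_eq_zero (Finset.mem_univ j) hz
        rw [this, zero_mul]
      · intro h; exact absurd (Finset.mem_univ xs) h
    rw [hmv, norm_mul, norm_prod]
    rw [Finset.prod_congr rfl (fun j _ => h1 j), Finset.prod_const_one, one_mul]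
  have hsets : {r : ℝ | ∃ V : Fin n → Matrix Bool Bool ℂ, (∀ j, IsPauliXYZ (V j)) ∧
          r = norm (ip (zeroVec n) ((kronN V).mulVec ψ)) ^ 2}
      = {r : ℝ | ∃ i : BV n, r = norm (ψ i) ^ 2} := by
    ext r
    constructor
    · rintro ⟨V, hV, rfl⟩
      exact ⟨fun j => if V j = PZ then false else true, by rw [key V hV]⟩
    · rintro ⟨i, rfl⟩
      have hV : ∀ j, IsPauliXYZ ((fun j => if i j then PX else PZ) j) := by
        intro j
        by_cases h : i j <;> simp [IsPauliXYZ, h]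
      refine ⟨fun j => if i j then PX else PZ, hV, ?_⟩
      rw [key _ hV]
      have hxi : (fun j => if (fun j => if i j then PX else PZ) j = PZ then false else true) = i := by
        funext j
        by_cases h : i j <;> simp [h, hXneZ]
      rw [hxi]
  have hS2 : sSup {r : ℝ | ∃ i : BV n, r = norm (ψ i) ^ 2}
      = norm (ψ i₀) ^ 2 := by
    apply le_antisymm
    · refine csSup_le ⟨norm (ψ i₀) ^ 2, ⟨i₀, rfl⟩⟩ ?_
      rintro r ⟨i, rfl⟩
      exact hmax' i
    · exact le_csSup ⟨norm (ψ i₀) ^ 2, by rintro r ⟨i, rfl⟩; exact hmax' i⟩ ⟨i₀, rfl⟩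
  have hM1 : norm (ψ i₀) ^ 2 ≤ 1 := by
    calc norm (ψ i₀) ^ 2 ≤ ∑ i : BV n, norm (ψ i) ^ 2 :=
          Finset.single_le_sum (f := fun i => norm (ψ i) ^ 2)
            (fun i _ => sq_nonneg _) (Finset.mem_univ i₀)
      _ = 1 := hψ
  have hmvP : ∀ v : BV n → ℂ, (projV i₀).mulVec v = fun y => if y = i₀ then v i₀ else 0 := by
    intro v
    funext y
    show ∑ z : BV n, projV i₀ y z * v z = _
    unfold projV
    by_cases h : y = i₀ <;> simp [h]
  have hproj : IsIncoherent (projV i₀) := by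
    refine ⟨⟨Matrix.PosSemidef.of_dotProduct_mulVec_nonneg ?_ ?_, ?_⟩, ?_⟩
    · ext x y
      simp only [Matrix.conjTranspose_apply, projV, Matrix.of_apply]
      rw [apply_ite star]
      simp [and_comm]
    · intro x
      rw [hmvP]
      unfold dotProduct
      have : ∑ i : BV n, (star x) i * (if i = i₀ then x i₀ else 0)
          = star (x i₀) * x i₀ := by
        simp [Pi.star_apply, mul_ite]
      rw [this]
      exact star_mul_self_nonneg _
    · unfold Matrix.trace Matrix.diag projV
      simp
    · intro x y hxy
      unfold projV
      simp only [Matrix.of_apply, ite_eq_right_iff, and_imp]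
      rintro rfl rfl
      exact absurd rfl hxy
  have hfidproj : fid ψ (projV i₀) = norm (ψ i₀) ^ 2 := by
    unfold fid
    rw [hmvP]
    unfold ip
    have : ∑ i : BV n, (starRingEnd ℂ) (ψ i) * (if i = i₀ then ψ i₀ else 0)
        = (starRingEnd ℂ) (ψ i₀) * ψ i₀ := by
      simp [mul_ite]
    rw [this, ← Complex.normSq_eq_conj_mul_self]
    simp [Complex.sq_norm]
  have hfid_le : ∀ δ : Matrix (BV n) (BV n) ℂ, IsIncoherent δ →
      fid ψ δ ≤ norm (ψ i₀) ^ 2 := by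
    rintro δ ⟨⟨hpsd, htr⟩, hdiag⟩
    have hdnn : ∀ x, 0 ≤ (δ x x).re := by
      intro x
      have h := hpsd.dotProduct_mulVec_nonneg (Pi.single x 1)
      rw [Matrix.mulVec_single] at h
      have heq : dotProduct (star (Pi.single x 1)) (fun i => δ i x * 1) = δ x x := by
        simp [dotProduct, Pi.single_apply, apply_ite star, ite_mul]
      rw [show (MulOpposite.op (1:ℂ) • δ.col x) = fun i => δ i x * 1 by ext i; simp, heq] at h
      exact (Complex.le_def.mp h).1
    have hmvδ : δ.mulVec ψ = fun x => δ x x * ψ x := by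
      funext x
      show ∑ y : BV n, δ x y * ψ y = _
      rw [Finset.sum_eq_single x]
      · intro y _ hy
        rw [hdiag x y (fun h => hy h.symm), zero_mul]
      · intro h; exact absurd (Finset.mem_univ x) h
    have hfid : fid ψ δ = ∑ x : BV n, (δ x x).re * norm (ψ x) ^ 2 := by
      unfold fid ip
      rw [hmvδ, Complex.re_sum]
      refine Finset.sum_congr rfl fun x _ => ?_
      have h1 : (starRingEnd ℂ) (ψ x) * (δ x x * ψ x)
          = δ x x * ((starRingEnd ℂ) (ψ x) * ψ x) := by ring
      rw [h1, ← Complex.normSq_eq_conj_mul_self, Complex.mul_re]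
      simp [Complex.sq_norm]
    have htrre : ∑ x : BV n, (δ x x).re = 1 := by
      have h := congrArg Complex.re htr
      rw [Matrix.trace] at h
      simpa [Matrix.diag, Complex.re_sum] using h
    rw [hfid]
    calc ∑ x : BV n, (δ x x).re * norm (ψ x) ^ 2
        ≤ ∑ x : BV n, (δ x x).re * norm (ψ i₀) ^ 2 :=
          Finset.sum_le_sum fun x _ => mul_le_mul_of_nonneg_left (hmax' x) (hdnn x)
      _ = norm (ψ i₀) ^ 2 := by rw [← Finset.sum_mul, htrre, one_mul]
  have hCf : Cf ψ = Real.sqrt (1 - norm (ψ i₀) ^ 2) := by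
    apply le_antisymm
    · apply csInf_le
      · exact ⟨0, by rintro r ⟨δ, hδ, rfl⟩; exact Real.sqrt_nonneg _⟩
      · exact ⟨projV i₀, hproj, by rw [hfidproj]⟩
    · refine le_csInf ⟨Real.sqrt (1 - fid ψ (projV i₀)), projV i₀, hproj, rfl⟩ ?_
      rintro r ⟨δ, hδ, rfl⟩
      exact Real.sqrt_le_sqrt (by linarith [hfid_le δ hδ])
  refine ⟨by rw [hsets], ?_⟩
  rw [hS2, hCf, Real.sq_sqrt (by linarith)]
  ring

end

end SKW
end
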